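/- Define $\mathcal{L}_{\sigma,M}(\nu) = \mathbb{E}\left\|X - \overline{Y} + (\sigma^2/M)\,\nu(\overline{Y})\right\|^2$ where $Y_m = X + \mathcal{N}(0,\sigma^2 I_d)$ i.i.d. Then for any measurable $\nu: \mathbb{R}^d \to \mathbb{R}^d$ and any two pairs $(\sigma, M)$, $(\sigma', M')$ with $\sigma/\sqrt{M} = \sigma'/\sqrt{M'}$, one has $\mathcal{L}_{\sigma,M}(\nu) = \mathcal{L}_{\sigma',M'}(\nu)$. -/

import Mathlib

open MeasureTheory Finset

/-- Isotropic Gaussian density `N(z; 0, σ² I_d)` on `ℝ^d`. -/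
noncomputable def gaussPdf (d : ℕ) (σ : ℝ) (z : EuclideanSpace ℝ (Fin d)) : ℝ :=
  (2 * Real.pi * σ ^ 2) ^ (-(d : ℝ) / 2) * Real.exp (-‖z‖ ^ 2 / (2 * σ ^ 2))

/-- The GPS learning objective
`L_{σ,M}(ν) = E ‖X - Ȳ + (σ²/M) ν(Ȳ)‖²` where `Y m = X + N(0, σ² I_d)` i.i.d.
and `Ȳ` is the empirical mean of the measurements; written with the Gaussian noise
`γ = y - x` integrated against its density. -/
noncomputable def gpsLoss (d : ℕ) (σ : ℝ) (M : ℕ)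
    (p : EuclideanSpace ℝ (Fin d) → ℝ)
    (ν : EuclideanSpace ℝ (Fin d) → EuclideanSpace ℝ (Fin d)) : ℝ :=
  ∫ x, p x *
    ∫ γ : Fin M → EuclideanSpace ℝ (Fin d),
      (∏ m, gaussPdf d σ (γ m)) *
        ‖x - (x + (M : ℝ)⁻¹ • ∑ m, γ m)
          + (σ ^ 2 / M) • ν (x + (M : ℝ)⁻¹ • ∑ m, γ m)‖ ^ 2
      ∂(Measure.pi fun _ => volume)


noncomputable def g1 (σ t : ℝ) : ℝ :=
  (2 * Real.pi * σ ^ 2) ^ (-(1:ℝ)/2) * Real.exp (-t ^ 2 / (2 * σ ^ 2))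

lemma norm_sq_eq (d : ℕ) (z : EuclideanSpace ℝ (Fin d)) : ‖z‖ ^ 2 = ∑ i, z i ^ 2 := by
  rw [EuclideanSpace.norm_eq, Real.sq_sqrt (by positivity)]
  simp [sq_abs]

lemma gaussPdf_eq_prod (d : ℕ) (σ : ℝ) (z : EuclideanSpace ℝ (Fin d)) :
    gaussPdf d σ z = ∏ i, g1 σ (z i) := by
  unfold gaussPdf g1
  rw [Finset.prod_mul_distrib, Finset.prod_const, ← Real.exp_sum]
  congr 1
  · rw [show #(univ : Finset (Fin d)) = d from by simp,
      ← Real.rpow_natCast ((2 * Real.pi * σ ^ 2) ^ (-(1:ℝ)/2)) d,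
      ← Real.rpow_mul (by positivity)]
    congr 1
    ring
  · rw [norm_sq_eq]
    congr 1
    rw [← Finset.sum_neg_distrib, Finset.sum_div]
lemma gaussPdf_nonneg (d : ℕ) (σ : ℝ) (z : EuclideanSpace ℝ (Fin d)) : 0 ≤ gaussPdf d σ z := by
  unfold gaussPdf; positivity

lemma gaussPdf_continuous (d : ℕ) (σ : ℝ) : Continuous (gaussPdf d σ) := by
  unfold gaussPdf; fun_prop

lemma gaussPdf_measurable (d : ℕ) (σ : ℝ) : Measurable (gaussPdf d σ) :=
  (gaussPdf_continuous d σ).measurable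

lemma g1_nonneg (σ t : ℝ) : 0 ≤ g1 σ t := by
  unfold g1; positivity

lemma g1_continuous (σ : ℝ) : Continuous (g1 σ) := by
  unfold g1
  fun_prop

lemma g1_integrable {σ : ℝ} (hσ : 0 < σ) : Integrable (g1 σ) := by
  unfold g1
  refine Integrable.const_mul ?_ _
  have h : ∀ t : ℝ, -t ^ 2 / (2 * σ ^ 2) = -(1 / (2 * σ ^ 2)) * t ^ 2 := by
    intro t; ring
  simp_rw [h]
  exact integrable_exp_neg_mul_sq (by positivity)

lemma rpow_neg_half (x : ℝ) (hx : 0 ≤ x) : x ^ (-(1:ℝ)/2) = (Real.sqrt x)⁻¹ := by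
  rw [neg_div, Real.rpow_neg hx, Real.sqrt_eq_rpow]

lemma g1_conv (a b : ℝ) (ha : 0 < a) (hb : 0 < b) (z : ℝ) :
    ∫ y, g1 a y * g1 b (z - y) = g1 (Real.sqrt (a ^ 2 + b ^ 2)) z := by
  have hpi := Real.pi_pos
  have hs : (0:ℝ) < a ^ 2 + b ^ 2 := by positivity
  set s2 := a ^ 2 + b ^ 2 with hs2
  set k := s2 / (2 * a ^ 2 * b ^ 2) with hk_def
  have hk : 0 < k := by rw [hk_def]; positivity
  set m := a ^ 2 * z / s2 with hm_def
  have hexp : ∀ y : ℝ, g1 a y * g1 b (z - y)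
      = ((2 * Real.pi * a ^ 2) ^ (-(1:ℝ)/2) * (2 * Real.pi * b ^ 2) ^ (-(1:ℝ)/2)
          * Real.exp (-z ^ 2 / (2 * s2))) * Real.exp (-k * (y - m) ^ 2) := by
    intro y
    unfold g1
    rw [show ((2 * Real.pi * a ^ 2) ^ (-(1:ℝ)/2) * Real.exp (-y ^ 2 / (2 * a ^ 2))) *
        ((2 * Real.pi * b ^ 2) ^ (-(1:ℝ)/2) * Real.exp (-(z - y) ^ 2 / (2 * b ^ 2)))
        = (2 * Real.pi * a ^ 2) ^ (-(1:ℝ)/2) * (2 * Real.pi * b ^ 2) ^ (-(1:ℝ)/2)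
          * (Real.exp (-y ^ 2 / (2 * a ^ 2)) * Real.exp (-(z - y) ^ 2 / (2 * b ^ 2))) by ring,
      ← Real.exp_add]
    rw [show ((2 * Real.pi * a ^ 2) ^ (-(1:ℝ)/2) * (2 * Real.pi * b ^ 2) ^ (-(1:ℝ)/2)
          * Real.exp (-z ^ 2 / (2 * s2))) * Real.exp (-k * (y - m) ^ 2)
        = (2 * Real.pi * a ^ 2) ^ (-(1:ℝ)/2) * (2 * Real.pi * b ^ 2) ^ (-(1:ℝ)/2)
          * (Real.exp (-z ^ 2 / (2 * s2)) * Real.exp (-k * (y - m) ^ 2)) by ring,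
      ← Real.exp_add]
    congr 2
    rw [hk_def, hm_def, hs2]
    field_simp
    ring
  rw [integral_congr_ae (Filter.Eventually.of_forall hexp), integral_const_mul _ _]
  have h1 : ∫ y : ℝ, Real.exp (-k * (y - m) ^ 2) = Real.sqrt (Real.pi / k) := by
    rw [← integral_gaussian k]
    exact integral_sub_right_eq_self (fun y => Real.exp (-k * y ^ 2)) m
  rw [h1]
  unfold g1
  rw [Real.sq_sqrt hs.le]
  rw [rpow_neg_half _ (by positivity), rpow_neg_half _ (by positivity),
    rpow_neg_half _ (by positivity)]
  rw [show ((Real.sqrt (2 * Real.pi * a ^ 2))⁻¹ * (Real.sqrt (2 * Real.pi * b ^ 2))⁻¹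
        * Real.exp (-z ^ 2 / (2 * s2))) * Real.sqrt (Real.pi / k)
      = ((Real.sqrt (2 * Real.pi * a ^ 2))⁻¹ * (Real.sqrt (2 * Real.pi * b ^ 2))⁻¹
        * Real.sqrt (Real.pi / k)) * Real.exp (-z ^ 2 / (2 * s2)) by ring]
  congr 1
  rw [← Real.sqrt_inv, ← Real.sqrt_inv, ← Real.sqrt_mul (by positivity),
    ← Real.sqrt_mul (by positivity), ← Real.sqrt_inv]
  congr 1
  rw [hk_def, hs2]
  field_simp

lemma g1_conv_integrable {a b : ℝ} (ha : 0 < a) (hb : 0 < b) (c : ℝ) :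
    Integrable (fun t : ℝ => g1 a t * g1 b (c - t)) := by
  have h : Integrable (fun t : ℝ => g1 b (c - t) * g1 a t) := by
    refine Integrable.bdd_mul (c := (2 * Real.pi * b ^ 2) ^ (-(1:ℝ)/2))
        (g1_integrable ha) (((g1_continuous b).comp (by fun_prop)).aestronglyMeasurable) ?_
    refine Filter.Eventually.of_forall fun t => ?_
    rw [Real.norm_eq_abs, abs_of_nonneg (g1_nonneg _ _)]
    unfold g1
    calc (2 * Real.pi * b ^ 2) ^ (-(1:ℝ)/2) * Real.exp (-(c - t) ^ 2 / (2 * b ^ 2))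
        ≤ (2 * Real.pi * b ^ 2) ^ (-(1:ℝ)/2) * 1 := by
          refine mul_le_mul_of_nonneg_left ?_ (by positivity)
          refine Real.exp_le_one_iff.mpr ?_
          rw [neg_div]
          exact neg_nonpos.mpr (by positivity)
      _ = (2 * Real.pi * b ^ 2) ^ (-(1:ℝ)/2) := mul_one _
  exact h.congr (Filter.Eventually.of_forall fun t => mul_comm _ _)

lemma gaussPdf_conv (d : ℕ) {a b : ℝ} (ha : 0 < a) (hb : 0 < b)
    (z : EuclideanSpace ℝ (Fin d)) :
    ∫ y : EuclideanSpace ℝ (Fin d), gaussPdf d a y * gaussPdf d b (z - y)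
      = gaussPdf d (Real.sqrt (a ^ 2 + b ^ 2)) z := by
  have h := (EuclideanSpace.volume_preserving_symm_measurableEquiv_toLp (Fin d)).symm
  rw [← h.integral_comp (MeasurableEquiv.measurableEmbedding _)
      (fun y => gaussPdf d a y * gaussPdf d b (z - y))]
  have heq : ∀ v : Fin d → ℝ,
      gaussPdf d a ((MeasurableEquiv.toLp 2 (Fin d → ℝ)).symm.symm v)
        * gaussPdf d b (z - (MeasurableEquiv.toLp 2 (Fin d → ℝ)).symm.symm v)
      = ∏ i, (fun t => g1 a t * g1 b (z i - t)) (v i) := by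
    intro v
    rw [gaussPdf_eq_prod, gaussPdf_eq_prod, ← Finset.prod_mul_distrib]
    rfl
  rw [integral_congr_ae (Filter.Eventually.of_forall heq),
    MeasureTheory.integral_fintype_prod_volume_eq_prod (𝕜 := ℝ) (ι := Fin d)
      (fun i => fun t => g1 a t * g1 b (z i - t)),
    gaussPdf_eq_prod]
  exact Finset.prod_congr rfl fun i _ => g1_conv a b ha hb (z i)

lemma gaussPdf_conv_integrable (d : ℕ) {a b : ℝ} (ha : 0 < a) (hb : 0 < b)
    (z : EuclideanSpace ℝ (Fin d)) :
    Integrable (fun y : EuclideanSpace ℝ (Fin d) => gaussPdf d a y * gaussPdf d b (z - y)) := by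
  have h := (EuclideanSpace.volume_preserving_symm_measurableEquiv_toLp (Fin d)).symm
  rw [← h.integrable_comp_emb (MeasurableEquiv.measurableEmbedding _)]
  have hint : Integrable (fun v : Fin d → ℝ => ∏ i, (fun t => g1 a t * g1 b (z i - t)) (v i)) :=
    Integrable.fintype_prod (𝕜 := ℝ) fun i => g1_conv_integrable ha hb (z i)
  refine hint.congr (Filter.Eventually.of_forall fun v => ?_)
  rw [Function.comp_apply, gaussPdf_eq_prod, gaussPdf_eq_prod, ← Finset.prod_mul_distrib]
  rfl

lemma gaussPdf_conv_lintegral (d : ℕ) {a b : ℝ} (ha : 0 < a) (hb : 0 < b)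
    (z : EuclideanSpace ℝ (Fin d)) :
    ∫⁻ y : EuclideanSpace ℝ (Fin d),
        ENNReal.ofReal (gaussPdf d a y) * ENNReal.ofReal (gaussPdf d b (z - y))
      = ENNReal.ofReal (gaussPdf d (Real.sqrt (a ^ 2 + b ^ 2)) z) := by
  have : ∀ y : EuclideanSpace ℝ (Fin d),
      ENNReal.ofReal (gaussPdf d a y) * ENNReal.ofReal (gaussPdf d b (z - y))
        = ENNReal.ofReal (gaussPdf d a y * gaussPdf d b (z - y)) := fun y =>
    (ENNReal.ofReal_mul (gaussPdf_nonneg d a y)).symm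
  simp_rw [this]
  rw [← ofReal_integral_eq_lintegral_ofReal (gaussPdf_conv_integrable d ha hb z)
      (Filter.Eventually.of_forall fun y => mul_nonneg (gaussPdf_nonneg _ _ _) (gaussPdf_nonneg _ _ _)),
    gaussPdf_conv d ha hb z]

lemma key (d : ℕ) {σ : ℝ} (hσ : 0 < σ) (M : ℕ) (hM : 1 ≤ M) :
    ∀ g : EuclideanSpace ℝ (Fin d) → ENNReal, Measurable g →
    ∫⁻ γ : Fin M → EuclideanSpace ℝ (Fin d),
        (∏ m, ENNReal.ofReal (gaussPdf d σ (γ m))) * g (∑ m, γ m)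
      = ∫⁻ z, ENNReal.ofReal (gaussPdf d (σ * Real.sqrt M) z) * g z := by
  have ρmeas : ∀ a : ℝ, Measurable fun z : EuclideanSpace ℝ (Fin d) =>
      ENNReal.ofReal (gaussPdf d a z) :=
    fun a => ENNReal.measurable_ofReal.comp (gaussPdf_measurable d a)
  induction M, hM using Nat.le_induction with
  | base =>
    intro g hg
    have h := volume_preserving_funUnique (Fin 1) (EuclideanSpace ℝ (Fin d))
    have hf : Measurable fun z : EuclideanSpace ℝ (Fin d) =>
        ENNReal.ofReal (gaussPdf d σ z) * g z := (ρmeas σ).mul hg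
    calc ∫⁻ γ : Fin 1 → EuclideanSpace ℝ (Fin d),
          (∏ m, ENNReal.ofReal (gaussPdf d σ (γ m))) * g (∑ m, γ m)
        = ∫⁻ γ : Fin 1 → EuclideanSpace ℝ (Fin d),
            (fun z => ENNReal.ofReal (gaussPdf d σ z) * g z)
              ((MeasurableEquiv.funUnique (Fin 1) (EuclideanSpace ℝ (Fin d))) γ) := by
          refine lintegral_congr fun γ => ?_
          simp [Fin.prod_univ_one, Fin.sum_univ_one, MeasurableEquiv.funUnique]
      _ = ∫⁻ z, ENNReal.ofReal (gaussPdf d σ z) * g z := h.lintegral_comp hf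
      _ = ∫⁻ z, ENNReal.ofReal (gaussPdf d (σ * Real.sqrt ((1:ℕ):ℝ)) z) * g z := by
          norm_num
  | succ M hM ih =>
    intro g hg
    have hσM : (0:ℝ) < σ * Real.sqrt M := by
      have : (0:ℝ) < Real.sqrt M := Real.sqrt_pos.mpr (by exact_mod_cast hM)
      positivity
    set e := MeasurableEquiv.piFinSuccAbove (fun _ : Fin (M+1) => EuclideanSpace ℝ (Fin d)) 0 with he
    have hmp := volume_preserving_piFinSuccAbove (fun _ : Fin (M+1) => EuclideanSpace ℝ (Fin d)) 0
    set F : EuclideanSpace ℝ (Fin d) × (Fin M → EuclideanSpace ℝ (Fin d)) → ENNReal := fun q =>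
      (ENNReal.ofReal (gaussPdf d σ q.1) * ∏ m, ENNReal.ofReal (gaussPdf d σ (q.2 m)))
        * g (q.1 + ∑ m, q.2 m) with hF
    have hFmeas : Measurable F := by
      apply Measurable.mul
      · exact ((ρmeas σ).comp measurable_fst).mul
          (Finset.measurable_prod _ fun m _ =>
            (ρmeas σ).comp' ((measurable_pi_apply m).comp measurable_snd))
      · exact hg.comp' (measurable_fst.add
          (Finset.measurable_sum _ fun m _ => (measurable_pi_apply m).comp measurable_snd))
    have step1 : ∫⁻ γ : Fin (M+1) → EuclideanSpace ℝ (Fin d),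
        (∏ m, ENNReal.ofReal (gaussPdf d σ (γ m))) * g (∑ m, γ m)
        = ∫⁻ q : EuclideanSpace ℝ (Fin d) × (Fin M → EuclideanSpace ℝ (Fin d)), F q := by
      rw [← hmp.lintegral_comp hFmeas]
      refine lintegral_congr fun γ => ?_
      rw [hF]
      simp only [he, MeasurableEquiv.piFinSuccAbove, MeasurableEquiv.coe_mk,
        Fin.insertNthEquiv, Equiv.coe_fn_symm_mk, Fin.zero_succAbove]
      rw [Fin.prod_univ_succ, Fin.sum_univ_succ]
      simp [Fin.removeNth, Fin.zero_succAbove]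
    rw [step1, MeasureTheory.Measure.volume_eq_prod, lintegral_prod F hFmeas.aemeasurable]
    have step2 : ∀ x : EuclideanSpace ℝ (Fin d), ∫⁻ γ' : Fin M → EuclideanSpace ℝ (Fin d), F (x, γ')
        = ENNReal.ofReal (gaussPdf d σ x)
          * ∫⁻ z, ENNReal.ofReal (gaussPdf d (σ * Real.sqrt M) (z - x)) * g z := by
      intro x
      have : ∀ γ' : Fin M → EuclideanSpace ℝ (Fin d), F (x, γ')
          = ENNReal.ofReal (gaussPdf d σ x)
            * ((∏ m, ENNReal.ofReal (gaussPdf d σ (γ' m))) * g (x + ∑ m, γ' m)) := by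
        intro γ'; rw [hF]; ring
      have hmeasA : Measurable fun γ' : Fin M → EuclideanSpace ℝ (Fin d) =>
          (∏ m, ENNReal.ofReal (gaussPdf d σ (γ' m))) * g (x + ∑ m, γ' m) :=
        (Finset.measurable_prod _ fun m _ =>
          (ρmeas σ).comp' (measurable_pi_apply m)).mul (hg.comp'
            ((measurable_const.add (Finset.measurable_sum _ fun m _ => measurable_pi_apply m))))
      rw [lintegral_congr this, lintegral_const_mul _ hmeasA]
      congr 1
      rw [ih (fun s => g (x + s)) (hg.comp' (measurable_const.add measurable_id))]
      calc ∫⁻ s, ENNReal.ofReal (gaussPdf d (σ * Real.sqrt M) s) * g (x + s)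
          = ∫⁻ s, (fun z => ENNReal.ofReal (gaussPdf d (σ * Real.sqrt M) (z - x)) * g z) (x + s) := by
            refine lintegral_congr fun s => ?_
            simp [add_sub_cancel_left]
        _ = ∫⁻ z, ENNReal.ofReal (gaussPdf d (σ * Real.sqrt M) (z - x)) * g z :=
            lintegral_add_left_eq_self
              (fun z => ENNReal.ofReal (gaussPdf d (σ * Real.sqrt M) (z - x)) * g z) x
    rw [lintegral_congr step2]
    have hswap : ∫⁻ x : EuclideanSpace ℝ (Fin d), ENNReal.ofReal (gaussPdf d σ x)
          * ∫⁻ z, ENNReal.ofReal (gaussPdf d (σ * Real.sqrt M) (z - x)) * g z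
        = ∫⁻ z, (∫⁻ x, ENNReal.ofReal (gaussPdf d σ x)
            * ENNReal.ofReal (gaussPdf d (σ * Real.sqrt M) (z - x))) * g z := by
      have hm2 : Measurable (Function.uncurry fun x z =>
          ENNReal.ofReal (gaussPdf d σ x)
            * (ENNReal.ofReal (gaussPdf d (σ * Real.sqrt M) (z - x)) * g z)) := by
        apply Measurable.mul
        · exact (ρmeas σ).comp measurable_fst
        · exact (((ρmeas (σ * Real.sqrt M)).comp' (measurable_snd.sub measurable_fst))).mul
            (hg.comp measurable_snd)
      calc ∫⁻ x : EuclideanSpace ℝ (Fin d), ENNReal.ofReal (gaussPdf d σ x)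
            * ∫⁻ z, ENNReal.ofReal (gaussPdf d (σ * Real.sqrt M) (z - x)) * g z
          = ∫⁻ x : EuclideanSpace ℝ (Fin d), ∫⁻ z, ENNReal.ofReal (gaussPdf d σ x)
              * (ENNReal.ofReal (gaussPdf d (σ * Real.sqrt M) (z - x)) * g z) := by
            refine lintegral_congr fun x => ?_
            have hmeasB : Measurable fun z : EuclideanSpace ℝ (Fin d) =>
                ENNReal.ofReal (gaussPdf d (σ * Real.sqrt M) (z - x)) * g z :=
              ((ρmeas (σ * Real.sqrt M)).comp' (measurable_id.sub measurable_const)).mul hg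
            exact (lintegral_const_mul _ hmeasB).symm
        _ = ∫⁻ z, ∫⁻ x, ENNReal.ofReal (gaussPdf d σ x)
              * (ENNReal.ofReal (gaussPdf d (σ * Real.sqrt M) (z - x)) * g z) :=
            lintegral_lintegral_swap hm2.aemeasurable
        _ = ∫⁻ z, (∫⁻ x, ENNReal.ofReal (gaussPdf d σ x)
              * ENNReal.ofReal (gaussPdf d (σ * Real.sqrt M) (z - x))) * g z := by
            refine lintegral_congr fun z => ?_
            have hmeasC : Measurable fun x : EuclideanSpace ℝ (Fin d) =>
                ENNReal.ofReal (gaussPdf d σ x)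
                  * ENNReal.ofReal (gaussPdf d (σ * Real.sqrt M) (z - x)) :=
              (ρmeas σ).mul ((ρmeas (σ * Real.sqrt M)).comp'
                (measurable_const.sub measurable_id))
            calc ∫⁻ x, ENNReal.ofReal (gaussPdf d σ x)
                  * (ENNReal.ofReal (gaussPdf d (σ * Real.sqrt M) (z - x)) * g z)
                = ∫⁻ x, (ENNReal.ofReal (gaussPdf d σ x)
                    * ENNReal.ofReal (gaussPdf d (σ * Real.sqrt M) (z - x))) * g z :=
                  lintegral_congr fun x => by ring
              _ = _ := lintegral_mul_const _ hmeasC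
    rw [hswap]
    refine lintegral_congr fun z => ?_
    rw [gaussPdf_conv_lintegral d hσ hσM z]
    congr 3
    rw [mul_pow, Real.sq_sqrt (Nat.cast_nonneg M)]
    rw [show σ ^ 2 + σ ^ 2 * M = σ ^ 2 * (M + 1) by ring]
    rw [Real.sqrt_mul (sq_nonneg σ), Real.sqrt_sq hσ.le]
    push_cast
    ring

lemma gaussPdf_rescale (d : ℕ) {σ : ℝ} (hσ : 0 < σ) {M : ℕ} (hM : 1 ≤ M)
    (z : EuclideanSpace ℝ (Fin d)) :
    ((M:ℝ) ^ d) * gaussPdf d (σ * Real.sqrt M) ((M:ℝ) • z)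
      = gaussPdf d (σ / Real.sqrt M) z := by
  have hM0 : (0:ℝ) < M := by exact_mod_cast hM
  have hsM : (0:ℝ) < Real.sqrt M := Real.sqrt_pos.mpr hM0
  have h1 : (σ * Real.sqrt M) ^ 2 = σ ^ 2 * M := by
    rw [mul_pow, Real.sq_sqrt hM0.le]
  have h2 : (σ / Real.sqrt M) ^ 2 = σ ^ 2 / M := by
    rw [div_pow, Real.sq_sqrt hM0.le]
  unfold gaussPdf
  rw [h1, h2]
  have hnorm : ‖(M:ℝ) • z‖ = (M:ℝ) * ‖z‖ := by
    rw [norm_smul, Real.norm_eq_abs, abs_of_pos hM0]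
  rw [hnorm]
  have hexp : -((M:ℝ) * ‖z‖) ^ 2 / (2 * (σ ^ 2 * M)) = -‖z‖ ^ 2 / (2 * (σ ^ 2 / M)) := by
    field_simp
  rw [hexp]
  rw [show ((M:ℝ) ^ d) * ((2 * Real.pi * (σ ^ 2 * M)) ^ (-(d : ℝ) / 2)
        * Real.exp (-‖z‖ ^ 2 / (2 * (σ ^ 2 / M))))
      = (((M:ℝ) ^ d) * (2 * Real.pi * (σ ^ 2 * M)) ^ (-(d : ℝ) / 2))
        * Real.exp (-‖z‖ ^ 2 / (2 * (σ ^ 2 / M))) from by ring]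
  congr 1
  have hA : (0:ℝ) < 2 * Real.pi * σ ^ 2 := by positivity
  rw [show (2 * Real.pi * (σ ^ 2 * M) : ℝ) = (2 * Real.pi * σ ^ 2) * M from by ring,
    show (2 * Real.pi * (σ ^ 2 / M) : ℝ) = (2 * Real.pi * σ ^ 2) / M from by ring,
    Real.mul_rpow hA.le hM0.le, Real.div_rpow hA.le hM0.le]
  rw [eq_div_iff (Real.rpow_pos_of_pos hM0 (-(d : ℝ) / 2)).ne', ← Real.rpow_natCast (M:ℝ) d]
  rw [show ((M:ℝ) ^ (d:ℝ) * ((2 * Real.pi * σ ^ 2) ^ (-(d : ℝ) / 2) * (M:ℝ) ^ (-(d : ℝ) / 2)))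
        * (M:ℝ) ^ (-(d : ℝ) / 2)
      = (2 * Real.pi * σ ^ 2) ^ (-(d : ℝ) / 2)
        * ((M:ℝ) ^ (d:ℝ) * ((M:ℝ) ^ (-(d : ℝ) / 2) * (M:ℝ) ^ (-(d : ℝ) / 2))) from by ring,
    ← Real.rpow_add hM0, ← Real.rpow_add hM0,
    show (d:ℝ) + (-(d : ℝ) / 2 + -(d : ℝ) / 2) = 0 from by ring, Real.rpow_zero, mul_one]

lemma scale_lintegral (d : ℕ) {σ : ℝ} (hσ : 0 < σ) {M : ℕ} (hM : 1 ≤ M)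
    (g : EuclideanSpace ℝ (Fin d) → ENNReal) (hg : Measurable g) :
    ∫⁻ s, ENNReal.ofReal (gaussPdf d (σ * Real.sqrt M) s) * g ((M:ℝ)⁻¹ • s)
      = ∫⁻ z, ENNReal.ofReal (gaussPdf d (σ / Real.sqrt M) z) * g z := by
  have hM0 : (0:ℝ) < M := by exact_mod_cast hM
  have hMd : (0:ℝ) < (M:ℝ) ^ d := by positivity
  set c := ENNReal.ofReal ((M:ℝ) ^ d) with hc
  have hc0 : c ≠ 0 := by simp [hc, ENNReal.ofReal_eq_zero, not_le, hMd, Nat.one_le_iff_ne_zero.mp hM]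
  have hctop : c ≠ ⊤ := ENNReal.ofReal_ne_top
  have ρm : Measurable fun s : EuclideanSpace ℝ (Fin d) =>
      ENNReal.ofReal (gaussPdf d (σ * Real.sqrt M) s) :=
    ENNReal.measurable_ofReal.comp (gaussPdf_measurable _ _)
  have hmeas : Measurable fun s : EuclideanSpace ℝ (Fin d) =>
      ENNReal.ofReal (gaussPdf d (σ * Real.sqrt M) s) * g ((M:ℝ)⁻¹ • s) :=
    ρm.mul (hg.comp' (measurable_const_smul _))
  have hmap : Measure.map (((M:ℝ)) • · : EuclideanSpace ℝ (Fin d) → EuclideanSpace ℝ (Fin d))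
      volume = ENNReal.ofReal (|(((M:ℝ)) ^ Module.finrank ℝ (EuclideanSpace ℝ (Fin d)))⁻¹|) • volume :=
    Measure.map_addHaar_smul volume hM0.ne'
  have hmapped := lintegral_map (μ := (volume : Measure (EuclideanSpace ℝ (Fin d)))) hmeas (measurable_const_smul ((M:ℝ)))
  rw [hmap, lintegral_smul_measure] at hmapped
  have habs : ENNReal.ofReal (|(((M:ℝ)) ^ Module.finrank ℝ (EuclideanSpace ℝ (Fin d)))⁻¹|) = c⁻¹ := by
    rw [finrank_euclideanSpace_fin, abs_inv, abs_of_pos hMd, ENNReal.ofReal_inv_of_pos hMd]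
  rw [habs] at hmapped
  have hcomp : Measurable fun z : EuclideanSpace ℝ (Fin d) =>
      ENNReal.ofReal (gaussPdf d (σ * Real.sqrt M) ((M:ℝ) • z)) * g ((M:ℝ)⁻¹ • (M:ℝ) • z) :=
    hmeas.comp' (measurable_const_smul _)
  calc ∫⁻ s, ENNReal.ofReal (gaussPdf d (σ * Real.sqrt M) s) * g ((M:ℝ)⁻¹ • s)
      = c * (c⁻¹ * ∫⁻ s, ENNReal.ofReal (gaussPdf d (σ * Real.sqrt M) s) * g ((M:ℝ)⁻¹ • s)) := by
        rw [← mul_assoc, ENNReal.mul_inv_cancel hc0 hctop, one_mul]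
    _ = c * ∫⁻ z, ENNReal.ofReal (gaussPdf d (σ * Real.sqrt M) ((M:ℝ) • z))
          * g ((M:ℝ)⁻¹ • (M:ℝ) • z) := by rw [← smul_eq_mul c⁻¹, hmapped]
    _ = ∫⁻ z, c * (ENNReal.ofReal (gaussPdf d (σ * Real.sqrt M) ((M:ℝ) • z))
          * g ((M:ℝ)⁻¹ • (M:ℝ) • z)) := (lintegral_const_mul c hcomp).symm
    _ = ∫⁻ z, ENNReal.ofReal (gaussPdf d (σ / Real.sqrt M) z) * g z := by
        refine lintegral_congr fun z => ?_
        rw [smul_smul, inv_mul_cancel₀ hM0.ne', one_smul, ← mul_assoc, hc,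
          ← ENNReal.ofReal_mul hMd.le, gaussPdf_rescale d hσ hM z]

lemma inner_eq (d : ℕ) {σ : ℝ} (hσ : 0 < σ) {M : ℕ} (hM : 1 ≤ M)
    (ν : EuclideanSpace ℝ (Fin d) → EuclideanSpace ℝ (Fin d)) (hν : Measurable ν)
    (x : EuclideanSpace ℝ (Fin d)) :
    (∫ γ : Fin M → EuclideanSpace ℝ (Fin d),
      (∏ m, gaussPdf d σ (γ m)) *
        ‖x - (x + (M : ℝ)⁻¹ • ∑ m, γ m)
          + (σ ^ 2 / M) • ν (x + (M : ℝ)⁻¹ • ∑ m, γ m)‖ ^ 2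
      ∂(Measure.pi fun _ => volume))
    = (∫⁻ z, ENNReal.ofReal (gaussPdf d (σ / Real.sqrt M) z)
        * ENNReal.ofReal (‖x - (x + z) + (σ ^ 2 / M) • ν (x + z)‖ ^ 2)).toReal := by
  have hM0 : (0:ℝ) < M := by exact_mod_cast hM
  -- the measurable "target" function
  set G : EuclideanSpace ℝ (Fin d) → ENNReal := fun w =>
    ENNReal.ofReal (‖x - (x + w) + (σ ^ 2 / M) • ν (x + w)‖ ^ 2) with hG
  have hGmeas : Measurable G := by
    apply ENNReal.measurable_ofReal.comp'
    apply Measurable.pow_const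
    apply Measurable.norm
    exact ((measurable_const.sub (measurable_const.add measurable_id)).add
      ((hν.comp' (measurable_const.add measurable_id)).fun_const_smul _))
  have hsum : Measurable fun γ : Fin M → EuclideanSpace ℝ (Fin d) =>
      (M : ℝ)⁻¹ • ∑ m, γ m :=
    (Finset.measurable_sum _ fun m _ => measurable_pi_apply m).fun_const_smul _
  have hΦmeas : Measurable fun γ : Fin M → EuclideanSpace ℝ (Fin d) =>
      (∏ m, gaussPdf d σ (γ m)) *
        ‖x - (x + (M : ℝ)⁻¹ • ∑ m, γ m)
          + (σ ^ 2 / M) • ν (x + (M : ℝ)⁻¹ • ∑ m, γ m)‖ ^ 2 := by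
    refine Measurable.mul (Finset.measurable_prod _ fun m _ =>
      (gaussPdf_measurable d σ).comp' (measurable_pi_apply m)) ?_
    apply Measurable.pow_const
    apply Measurable.norm
    exact ((measurable_const.sub (measurable_const.add hsum)).add
      ((hν.comp' (measurable_const.add hsum)).fun_const_smul _))
  rw [MeasureTheory.integral_eq_lintegral_of_nonneg_ae
      (Filter.Eventually.of_forall fun γ =>
        mul_nonneg (Finset.prod_nonneg fun m _ => gaussPdf_nonneg d σ (γ m)) (by positivity))
      hΦmeas.aestronglyMeasurable]
  congr 1
  have hofReal : ∀ γ : Fin M → EuclideanSpace ℝ (Fin d),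
      ENNReal.ofReal ((∏ m, gaussPdf d σ (γ m)) *
        ‖x - (x + (M : ℝ)⁻¹ • ∑ m, γ m)
          + (σ ^ 2 / M) • ν (x + (M : ℝ)⁻¹ • ∑ m, γ m)‖ ^ 2)
      = (∏ m, ENNReal.ofReal (gaussPdf d σ (γ m))) * G ((M : ℝ)⁻¹ • ∑ m, γ m) := by
    intro γ
    rw [ENNReal.ofReal_mul (Finset.prod_nonneg fun m _ => gaussPdf_nonneg d σ (γ m)),
      ENNReal.ofReal_prod_of_nonneg fun m _ => gaussPdf_nonneg d σ (γ m), hG]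
  rw [lintegral_congr hofReal]
  have hvol : (Measure.pi fun _ : Fin M => (volume : Measure (EuclideanSpace ℝ (Fin d))))
      = volume := MeasureTheory.volume_pi.symm
  rw [hvol]
  have hGcomp : Measurable fun s : EuclideanSpace ℝ (Fin d) => G ((M : ℝ)⁻¹ • s) :=
    hGmeas.comp' (measurable_const_smul _)
  rw [key d hσ M hM (fun s => G ((M : ℝ)⁻¹ • s)) hGcomp]
  exact scale_lintegral d hσ hM G hGmeas

/-- universality of the GPS parametrization: for any measurable `ν` and
any two models `(σ, M)`, `(σ', M')` in the same universality class
`σ/√M = σ'/√M'`, the losses coincide: `L_{σ,M}(ν) = L_{σ',M'}(ν)`. -/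
theorem gpsLoss_universal
    (d : ℕ) (σ σ' : ℝ) (M M' : ℕ)
    (hσ : 0 < σ) (hσ' : 0 < σ') (hM : 1 ≤ M) (hM' : 1 ≤ M')
    (p : EuclideanSpace ℝ (Fin d) → ℝ) (hp_meas : Measurable p)
    (hp_nonneg : ∀ x, 0 ≤ p x) (hp_int : ∫ x, p x = 1)
    (ν : EuclideanSpace ℝ (Fin d) → EuclideanSpace ℝ (Fin d)) (hν : Measurable ν)
    (huniv : σ / Real.sqrt M = σ' / Real.sqrt M') :
    gpsLoss d σ M p ν = gpsLoss d σ' M' p ν := by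
  have hsq : σ ^ 2 / (M:ℝ) = σ' ^ 2 / (M':ℝ) := by
    have hM0 : (0:ℝ) < M := by exact_mod_cast hM
    have hM0' : (0:ℝ) < M' := by exact_mod_cast hM'
    have h := congrArg (fun t : ℝ => t ^ 2) huniv
    simpa [div_pow, Real.sq_sqrt hM0.le, Real.sq_sqrt hM0'.le] using h
  unfold gpsLoss
  have hA := fun x => inner_eq d hσ hM ν hν x
  have hB := fun x => inner_eq d hσ' hM' ν hν x
  simp_rw [hA, hB, huniv, hsq]
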